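/- Let F be a nonnegative subharmonic function on {w ∈ ℂ : |w| ≥ 1} such that ∫_{|w|≥1} F(w)/|w| dμ(w) < ∞, where μ is Lebesgue measure. Then F is bounded; more precisely, max_{|w|=r} F(w) ≤ max_{|w|=1} F(w) for every r ≥ 1. -/

import Mathlib

open MeasureTheory Real

open Set in

theorem circleMeanSq (z : ℂ) (ρ : ℝ) :
    ∫ θ in (0:ℝ)..(2*π), (‖z + ρ * Complex.exp (θ * Complex.I)‖)^2
      = 2*π*((‖z‖)^2 + ρ^2) := by
  have h : ∀ θ : ℝ, (‖z + ρ * Complex.exp (θ * Complex.I)‖)^2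
      = ((‖z‖)^2 + ρ^2) + ((2*ρ*z.re) * Real.cos θ + (2*ρ*z.im) * Real.sin θ) := by
    intro θ
    rw [Complex.sq_norm, Complex.sq_norm]
    simp only [Complex.normSq_apply, Complex.exp_mul_I, Complex.add_re, Complex.add_im,
      Complex.mul_re, Complex.mul_im, Complex.cos_ofReal_re, Complex.sin_ofReal_re,
      Complex.cos_ofReal_im, Complex.sin_ofReal_im, Complex.I_re, Complex.I_im,
      Complex.ofReal_re, Complex.ofReal_im]
    linear_combination ρ^2 * Real.cos_sq_add_sin_sq θ
  simp only [h]
  rw [intervalIntegral.integral_add intervalIntegrable_const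
      ((by fun_prop : Continuous fun θ : ℝ => (2*ρ*z.re) * Real.cos θ + (2*ρ*z.im) * Real.sin θ).intervalIntegrable _ _),
    intervalIntegral.integral_const,
    intervalIntegral.integral_add
      ((by fun_prop : Continuous fun θ : ℝ => (2*ρ*z.re) * Real.cos θ).intervalIntegrable _ _)
      ((by fun_prop : Continuous fun θ : ℝ => (2*ρ*z.im) * Real.sin θ).intervalIntegrable _ _),
    intervalIntegral.integral_const_mul, intervalIntegral.integral_const_mul,
    integral_cos, integral_sin]
  simp



theorem sphereCompactImage (F : ℂ → ℝ) (hcont : ContinuousOn F {w : ℂ | 1 ≤ ‖w‖})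
    (r : ℝ) (hr : 1 ≤ r) : IsCompact (F '' {v : ℂ | ‖v‖ = r}) := by
  have hs : {v : ℂ | ‖v‖ = r} = Metric.sphere 0 r := by
    ext v; simp [Complex.dist_eq]
  rw [hs]
  exact (isCompact_sphere 0 r).image_of_continuousOn
    (hcont.mono (fun v hv => by simp [Complex.dist_eq] at hv; simp [hv, hr]))

theorem maxPrinciple (F : ℂ → ℝ)
    (hcont : ContinuousOn F {w : ℂ | 1 ≤ ‖w‖})
    (hsub : ∀ w : ℂ, 1 < ‖w‖ → ∀ ρ : ℝ, 0 < ρ →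
      Metric.closedBall w ρ ⊆ {w : ℂ | 1 < ‖w‖} →
      F w ≤ (1 / (2 * π)) * ∫ θ in (0 : ℝ)..(2 * π),
        F (w + ρ * Complex.exp (θ * Complex.I)))
    (R : ℝ) (hR : 1 < R) (w : ℂ) (hw1 : 1 ≤ ‖w‖) (hwR : ‖w‖ ≤ R) :
    F w ≤ max (sSup (F '' {v : ℂ | ‖v‖ = 1}))
      (sSup (F '' {v : ℂ | ‖v‖ = R})) := by
  set M := max (sSup (F '' {v : ℂ | ‖v‖ = 1}))
      (sSup (F '' {v : ℂ | ‖v‖ = R})) with hM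
  have hR0 : (0:ℝ) < R := lt_trans one_pos hR
  have hπ : (0:ℝ) < π := Real.pi_pos
  have key : ∀ ε : ℝ, 0 < ε → F w ≤ M + ε * R^2 := by
    intro ε hε
    set A : Set ℂ := {v | 1 ≤ ‖v‖ ∧ ‖v‖ ≤ R} with hA
    have hAcl : A = Metric.closedBall 0 R ∩ {v : ℂ | 1 ≤ ‖v‖} := by
      ext v; simp [hA, Complex.dist_eq, and_comm]
    have hAcompact : IsCompact A := by
      rw [hAcl]
      exact (isCompact_closedBall 0 R).inter_right
        (isClosed_le continuous_const continuous_norm)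
    have hAsub : A ⊆ {v : ℂ | 1 ≤ ‖v‖} := fun v hv => hv.1
    set G : ℂ → ℝ := fun v => F v + ε * (‖v‖)^2 with hG
    have hGcont : ContinuousOn G A :=
      (hcont.mono hAsub).add (Continuous.continuousOn (by continuity))
    have hwA : w ∈ A := ⟨hw1, hwR⟩
    obtain ⟨z, hzA, hmax⟩ := hAcompact.exists_isMaxOn ⟨w, hwA⟩ hGcont
    have hbd : ‖z‖ = 1 ∨ ‖z‖ = R := by
      by_contra hc
      push_neg at hc
      have h1z : 1 < ‖z‖ := lt_of_le_of_ne hzA.1 (Ne.symm hc.1)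
      have hzR : ‖z‖ < R := lt_of_le_of_ne hzA.2 hc.2
      set ρ : ℝ := min (‖z‖ - 1) (R - ‖z‖) / 2 with hρdef
      have hm1 := min_le_left (‖z‖ - 1) (R - ‖z‖)
      have hm2 := min_le_right (‖z‖ - 1) (R - ‖z‖)
      have hρpos : 0 < ρ := by
        apply div_pos (lt_min (by linarith) (by linarith)) two_pos
      have hρ1 : ρ ≤ (‖z‖ - 1) / 2 := by rw [hρdef]; linarith
      have hρ2 : ρ ≤ (R - ‖z‖) / 2 := by rw [hρdef]; linarith
      have hball : Metric.closedBall z ρ ⊆ {v : ℂ | 1 < ‖v‖} := by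
        intro v hv
        rw [Metric.mem_closedBall, Complex.dist_eq] at hv
        have h1 : ‖z‖ - ‖v‖ ≤ ‖z - v‖ := norm_sub_norm_le z v
        rw [norm_sub_rev] at h1
        simp only [Set.mem_setOf_eq]
        linarith
      have hcirc : ∀ θ : ℝ, z + ρ * Complex.exp (θ * Complex.I) ∈ A := by
        intro θ
        have habs : ‖(ρ:ℂ) * Complex.exp (θ * Complex.I)‖ = ρ := by
          rw [norm_mul, Complex.norm_exp_ofReal_mul_I, mul_one, Complex.norm_real, Real.norm_eq_abs,
            abs_of_pos hρpos]
        constructor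
        · have h3 : ‖z + (ρ:ℂ) * Complex.exp (θ * Complex.I) - (ρ:ℂ) * Complex.exp (θ * Complex.I)‖
              ≤ ‖z + (ρ:ℂ) * Complex.exp (θ * Complex.I)‖ + ‖(ρ:ℂ) * Complex.exp (θ * Complex.I)‖ :=
            norm_sub_le _ _
          simp only [add_sub_cancel_right, habs] at h3
          linarith
        · have h4 := norm_add_le z ((ρ:ℂ) * Complex.exp (θ * Complex.I))
          rw [habs] at h4
          linarith
      have hmap : Continuous fun θ : ℝ => z + (ρ:ℂ) * Complex.exp (θ * Complex.I) :=
        continuous_const.add (continuous_const.mul (Complex.continuous_exp.comp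
          (Complex.continuous_ofReal.mul continuous_const)))
      have hcont_circ : Continuous fun θ : ℝ => F (z + ρ * Complex.exp (θ * Complex.I)) := by
        apply hcont.comp_continuous hmap
        intro θ; exact hAsub (hcirc θ)
      have hs := hsub z h1z ρ hρpos hball
      have hInt1 : IntervalIntegrable (fun θ : ℝ => F (z + ρ * Complex.exp (θ * Complex.I)))
          volume 0 (2*π) := hcont_circ.intervalIntegrable _ _
      have habscont : Continuous fun θ : ℝ =>
          ε * (‖z + ρ * Complex.exp (θ * Complex.I)‖)^2 :=
        continuous_const.mul ((continuous_norm.comp hmap).pow 2)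
      have hmono : (∫ θ in (0:ℝ)..(2*π), F (z + ρ * Complex.exp (θ * Complex.I)))
          ≤ ∫ θ in (0:ℝ)..(2*π),
            (G z - ε * (‖z + ρ * Complex.exp (θ * Complex.I)‖)^2) := by
        apply intervalIntegral.integral_mono_on (by linarith) hInt1
          ((continuous_const.sub habscont).intervalIntegrable _ _)
        intro θ hθ
        have hmz := (isMaxOn_iff.mp hmax) _ (hcirc θ)
        simp only [hG, Pi.sub_apply] at hmz ⊢
        linarith
      have hR2 : (∫ θ in (0:ℝ)..(2*π),
            (G z - ε * (‖z + ρ * Complex.exp (θ * Complex.I)‖)^2))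
          = 2*π*(G z) - ε * (2*π*((‖z‖)^2 + ρ^2)) := by
        rw [intervalIntegral.integral_sub intervalIntegrable_const
            (habscont.intervalIntegrable _ _),
          intervalIntegral.integral_const, intervalIntegral.integral_const_mul, circleMeanSq]
        simp
      have h3 : (1/(2*π)) * (2*π*(G z) - ε * (2*π*((‖z‖)^2 + ρ^2)))
          = F z - ε*ρ^2 := by
        simp only [hG]
        field_simp
        ring
      have hfinal : F z ≤ F z - ε * ρ^2 := by
        calc F z ≤ (1/(2*π)) * ∫ θ in (0:ℝ)..(2*π),
              F (z + ρ * Complex.exp (θ * Complex.I)) := hs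
          _ ≤ (1/(2*π)) * (2*π*(G z) - ε * (2*π*((‖z‖)^2 + ρ^2))) := by
              rw [← hR2]
              exact mul_le_mul_of_nonneg_left hmono (by positivity)
          _ = F z - ε*ρ^2 := h3
      nlinarith [mul_pos hε (pow_pos hρpos 2)]
    have hBdd1 : BddAbove (F '' {v : ℂ | ‖v‖ = 1}) :=
      (sphereCompactImage F hcont 1 le_rfl).bddAbove
    have hBddR : BddAbove (F '' {v : ℂ | ‖v‖ = R}) :=
      (sphereCompactImage F hcont R hR.le).bddAbove
    have hFzM : F z ≤ M := by
      rcases hbd with h | h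
      · exact le_trans (le_csSup hBdd1 ⟨z, h, rfl⟩) (le_max_left _ _)
      · exact le_trans (le_csSup hBddR ⟨z, h, rfl⟩) (le_max_right _ _)
    have h1 : G w ≤ G z := (isMaxOn_iff.mp hmax) w hwA
    have hz2 : (‖z‖)^2 ≤ R^2 :=
      pow_le_pow_left₀ (norm_nonneg z) hzA.2 2
    simp only [hG] at h1
    nlinarith [norm_nonneg w, sq_nonneg (‖w‖)]
  apply le_of_forall_pos_le_add
  intro ε hε
  have hk := key (ε / R^2) (div_pos hε (pow_pos hR0 2))
  have hc : ε / R^2 * R^2 = ε := by field_simp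
  linarith


theorem areaBound (F : ℂ → ℝ)
    (hcont : ContinuousOn F {w : ℂ | 1 ≤ ‖w‖})
    (hnn : ∀ w : ℂ, 1 ≤ ‖w‖ → 0 ≤ F w)
    (hsub : ∀ w : ℂ, 1 < ‖w‖ → ∀ ρ : ℝ, 0 < ρ →
      Metric.closedBall w ρ ⊆ {w : ℂ | 1 < ‖w‖} →
      F w ≤ (1 / (2 * π)) * ∫ θ in (0 : ℝ)..(2 * π),
        F (w + ρ * Complex.exp (θ * Complex.I)))
    (hint : IntegrableOn (fun w : ℂ => F w / ‖w‖)
      {w : ℂ | 1 ≤ ‖w‖} volume)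
    (w : ℂ) (hw : 3 ≤ ‖w‖) :
    π * (‖w‖)^2 / 4 * F w
      ≤ (3 * ‖w‖ / 2) *
        ∫ v in {v : ℂ | 1 ≤ ‖v‖}, F v / ‖v‖ := by
  set B := ∫ v in {v : ℂ | 1 ≤ ‖v‖}, F v / ‖v‖ with hB
  set R := ‖w‖ with hRdef
  set r := R / 2 with hrdef
  have hπ := Real.pi_pos
  have hr1 : (3:ℝ)/2 ≤ r := by rw [hrdef]; linarith
  have hrpos : (0:ℝ) < r := by linarith
  have hball_dom : ∀ v ∈ Metric.closedBall w r,
      r ≤ ‖v‖ ∧ ‖v‖ ≤ R + r := by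
    intro v hv
    rw [Metric.mem_closedBall, Complex.dist_eq] at hv
    have h1 : ‖w‖ - ‖v‖ ≤ ‖w - v‖ := norm_sub_norm_le w v
    have h1' : ‖v‖ - ‖w‖ ≤ ‖v - w‖ := norm_sub_norm_le v w
    rw [norm_sub_rev] at h1
    constructor
    · have : R = r + r := by rw [hrdef]; ring
      linarith
    · linarith
  -- step 1 : circle estimate
  have step1 : ∀ ρ : ℝ, ρ ∈ Set.Ioo (0:ℝ) r →
      2 * π * ρ * F w ≤ ∫ θ in Set.Ioo (-π) π,
        ρ * F (w + ρ * Complex.exp (θ * Complex.I)) := by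
    intro ρ hρ
    have hρ0 : (0:ℝ) < ρ := hρ.1
    have hρr : ρ < r := hρ.2
    have hb : Metric.closedBall w ρ ⊆ {v : ℂ | 1 < ‖v‖} := by
      intro v hv
      have h := (hball_dom v (Metric.closedBall_subset_closedBall hρr.le hv)).1
      simp only [Set.mem_setOf_eq]
      linarith
    have hs := hsub w (by rw [← hRdef]; linarith : 1 < ‖w‖) ρ hρ0 hb
    have hper : Function.Periodic
        (fun θ : ℝ => F (w + ρ * Complex.exp (θ * Complex.I))) (2*π) := by
      intro θ
      simp only
      congr 2
      rw [show ((θ + 2*π : ℝ) : ℂ) * Complex.I = θ * Complex.I + 2*π*Complex.I by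
        push_cast; ring, Complex.exp_add, Complex.exp_two_pi_mul_I, mul_one]
    have hshift : (∫ θ in (0:ℝ)..(2*π), F (w + ρ * Complex.exp (θ * Complex.I)))
        = ∫ θ in Set.Ioo (-π) π, F (w + ρ * Complex.exp (θ * Complex.I)) := by
      have h0 := hper.intervalIntegral_add_eq 0 (-π)
      rw [zero_add] at h0
      rw [h0, show -π + 2*π = π by ring, intervalIntegral.integral_of_le (by linarith),
        integral_Ioc_eq_integral_Ioo]
    have h2 : 2*π*(F w) ≤ ∫ θ in Set.Ioo (-π) π,
        F (w + ρ * Complex.exp (θ * Complex.I)) := by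
      rw [← hshift]
      have hmul := mul_le_mul_of_nonneg_left hs (le_of_lt (by linarith : (0:ℝ) < 2*π))
      calc 2*π*(F w) ≤ 2*π*((1 / (2 * π)) * ∫ θ in (0:ℝ)..(2*π),
            F (w + ρ * Complex.exp (θ * Complex.I))) := hmul
        _ = ∫ θ in (0:ℝ)..(2*π), F (w + ρ * Complex.exp (θ * Complex.I)) := by
            rw [← mul_assoc, mul_one_div_cancel (by positivity), one_mul]
    rw [MeasureTheory.integral_const_mul]
    calc 2 * π * ρ * F w = ρ * (2*π*(F w)) := by ring
      _ ≤ ρ * ∫ θ in Set.Ioo (-π) π, F (w + ρ * Complex.exp (θ * Complex.I)) :=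
        mul_le_mul_of_nonneg_left h2 hρ0.le
  -- continuity of polar integrand
  have hmap2 : Continuous fun p : ℝ × ℝ => w + (p.1:ℂ) * Complex.exp (p.2 * Complex.I) :=
    continuous_const.add ((Complex.continuous_ofReal.comp continuous_fst).mul
      (Complex.continuous_exp.comp ((Complex.continuous_ofReal.comp continuous_snd).mul
        continuous_const)))
  have hKcont : ContinuousOn
      (fun p : ℝ × ℝ => p.1 * F (w + p.1 * Complex.exp (p.2 * Complex.I)))
      (Set.Icc 0 r ×ˢ Set.Icc (-π) π) := by
    apply ContinuousOn.mul (continuous_fst.continuousOn)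
    apply hcont.comp hmap2.continuousOn
    intro p hp
    have hmem : w + (p.1:ℂ) * Complex.exp (p.2 * Complex.I) ∈ Metric.closedBall w r := by
      rw [Metric.mem_closedBall, Complex.dist_eq]
      have he : w + (p.1:ℂ) * Complex.exp (p.2 * Complex.I) - w
          = (p.1:ℂ) * Complex.exp (p.2 * Complex.I) := by ring
      rw [he, norm_mul, Complex.norm_exp_ofReal_mul_I, mul_one, Complex.norm_real, Real.norm_eq_abs,
        abs_of_nonneg hp.1.1]
      exact hp.1.2
    have := (hball_dom _ hmem).1
    simp only [Set.mem_setOf_eq]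
    linarith
  have hIntK : IntegrableOn
      (fun p : ℝ × ℝ => p.1 * F (w + p.1 * Complex.exp (p.2 * Complex.I)))
      (Set.Ioo (0:ℝ) r ×ˢ Set.Ioo (-π) π) volume := by
    apply (hKcont.integrableOn_compact ((isCompact_Icc).prod isCompact_Icc)).mono_set
    exact Set.prod_mono Set.Ioo_subset_Icc_self Set.Ioo_subset_Icc_self
  have hsymm : ∀ p : ℝ × ℝ, Complex.polarCoord.symm p
      = (p.1:ℂ) * Complex.exp (p.2 * Complex.I) := by
    intro p
    rw [Complex.polarCoord_symm_apply, Complex.exp_mul_I,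
      Complex.ofReal_cos, Complex.ofReal_sin]
  have hpolar : (∫ p in Set.Ioo (0:ℝ) r ×ˢ Set.Ioo (-π) π,
        p.1 * F (w + p.1 * Complex.exp (p.2 * Complex.I)))
      = ∫ v in Metric.ball w r, F v := by
    set f : ℂ → ℝ := fun z => (Metric.ball (0:ℂ) r).indicator (fun z => F (w + z)) z with hf
    have h1 := Complex.integral_comp_polarCoord_symm f
    have hrhs : (∫ z, f z) = ∫ v in Metric.ball w r, F v := by
      have hz : ∀ z : ℂ, f z = (Metric.ball w r).indicator F (w + z) := by
        intro z
        have hmem : z ∈ Metric.ball (0:ℂ) r ↔ w + z ∈ Metric.ball w r := by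
          simp [Metric.mem_ball, Complex.dist_eq]
        by_cases h : z ∈ Metric.ball (0:ℂ) r
        · rw [hf]
          simp only
          rw [Set.indicator_of_mem h, Set.indicator_of_mem (hmem.mp h)]
        · rw [hf]
          simp only
          rw [Set.indicator_of_notMem h,
            Set.indicator_of_notMem (fun hc => h (hmem.mpr hc))]
      simp_rw [hz]
      rw [MeasureTheory.integral_add_left_eq_self,
        integral_indicator Metric.isOpen_ball.measurableSet]
    have hlhs : (∫ p in polarCoord.target, p.1 • f (Complex.polarCoord.symm p))
        = ∫ p in Set.Ioo (0:ℝ) r ×ˢ Set.Ioo (-π) π,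
          p.1 * F (w + p.1 * Complex.exp (p.2 * Complex.I)) := by
      rw [polarCoord_target]
      have hcong : ∀ p ∈ Set.Ioi (0:ℝ) ×ˢ Set.Ioo (-π) π,
          p.1 • f (Complex.polarCoord.symm p)
          = (Set.Ioo (0:ℝ) r ×ˢ Set.Ioo (-π) π).indicator
              (fun p : ℝ×ℝ => p.1 * F (w + p.1 * Complex.exp (p.2 * Complex.I))) p := by
        intro p hp
        rw [hsymm]
        have habs : ‖(p.1:ℂ) * Complex.exp (p.2*Complex.I)‖ = p.1 := by
          rw [norm_mul, Complex.norm_exp_ofReal_mul_I, mul_one, Complex.norm_real, Real.norm_eq_abs,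
            abs_of_pos hp.1]
        by_cases hpr : p.1 < r
        · have hpmem : p ∈ Set.Ioo (0:ℝ) r ×ˢ Set.Ioo (-π) π :=
            Set.mem_prod.mpr ⟨Set.mem_Ioo.mpr ⟨hp.1, hpr⟩, hp.2⟩
          rw [Set.indicator_of_mem hpmem]
          simp only [hf]
          rw [Set.indicator_of_mem (show ((p.1:ℂ) * Complex.exp (p.2*Complex.I))
              ∈ Metric.ball (0:ℂ) r by
            rw [Metric.mem_ball, Complex.dist_eq, sub_zero, habs]; exact hpr)]
          simp [smul_eq_mul]
        · rw [Set.indicator_of_notMem (fun hmem => hpr hmem.1.2)]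
          simp only [hf]
          rw [Set.indicator_of_notMem (show ¬ ((p.1:ℂ) * Complex.exp (p.2*Complex.I))
              ∈ Metric.ball (0:ℂ) r by
            rw [Metric.mem_ball, Complex.dist_eq, sub_zero, habs]; exact hpr)]
          rw [smul_zero]
      rw [setIntegral_congr_fun (measurableSet_Ioi.prod measurableSet_Ioo) hcong,
        setIntegral_indicator (measurableSet_Ioo.prod measurableSet_Ioo)]
      rw [Set.inter_eq_self_of_subset_right
        (Set.prod_mono Set.Ioo_subset_Ioi_self (subset_refl _))]
    rw [← hrhs, ← h1, hlhs]
  have hfub : (∫ p in Set.Ioo (0:ℝ) r ×ˢ Set.Ioo (-π) π,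
        p.1 * F (w + p.1 * Complex.exp (p.2 * Complex.I)))
      = ∫ ρ in Set.Ioo (0:ℝ) r, ∫ θ in Set.Ioo (-π) π,
          ρ * F (w + ρ * Complex.exp (θ * Complex.I)) := by
    rw [MeasureTheory.Measure.volume_eq_prod] at hIntK ⊢
    exact setIntegral_prod _ hIntK
  have hInner : IntegrableOn (fun ρ : ℝ => ∫ θ in Set.Ioo (-π) π,
      ρ * F (w + ρ * Complex.exp (θ * Complex.I))) (Set.Ioo (0:ℝ) r) volume := by
    have h2 := hIntK
    rw [IntegrableOn, MeasureTheory.Measure.volume_eq_prod, ← Measure.prod_restrict] at h2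
    exact h2.integral_prod_left
  have hmono : (∫ ρ in Set.Ioo (0:ℝ) r, 2*π*ρ*(F w))
      ≤ ∫ ρ in Set.Ioo (0:ℝ) r, ∫ θ in Set.Ioo (-π) π,
          ρ * F (w + ρ * Complex.exp (θ * Complex.I)) := by
    apply setIntegral_mono_on _ hInner measurableSet_Ioo step1
    apply IntegrableOn.mono_set _ Set.Ioo_subset_Icc_self
    exact (Continuous.continuousOn (by fun_prop)).integrableOn_compact isCompact_Icc
  have hval : (∫ ρ in Set.Ioo (0:ℝ) r, 2*π*ρ*(F w)) = π * r^2 * F w := by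
    rw [← integral_Ioc_eq_integral_Ioo, ← intervalIntegral.integral_of_le hrpos.le]
    have hid : ∀ ρ : ℝ, 2*π*ρ*(F w) = (2*π*(F w))*ρ := by intro ρ; ring
    simp_rw [hid]
    rw [intervalIntegral.integral_const_mul, integral_id]
    ring
  have hball_int : IntegrableOn F (Metric.ball w r) volume := by
    apply IntegrableOn.mono_set _ Metric.ball_subset_closedBall
    apply ContinuousOn.integrableOn_compact (isCompact_closedBall w r)
    apply hcont.mono
    intro v hv
    have := (hball_dom v hv).1
    simp only [Set.mem_setOf_eq]
    linarith
  have hnn_set : MeasurableSet {v : ℂ | 1 ≤ ‖v‖} :=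
    (isClosed_le continuous_const continuous_norm).measurableSet
  have hball_sub : Metric.ball w r ⊆ {v : ℂ | 1 ≤ ‖v‖} := by
    intro v hv
    have := (hball_dom v (Metric.ball_subset_closedBall hv)).1
    simp only [Set.mem_setOf_eq]
    linarith
  have hg_int : IntegrableOn (fun v : ℂ => (3*R/2) * (F v / ‖v‖))
      (Metric.ball w r) volume :=
    (hint.mono_set hball_sub).const_mul _
  have hstep4a : (∫ v in Metric.ball w r, F v)
      ≤ ∫ v in Metric.ball w r, (3*R/2) * (F v / ‖v‖) := by
    apply setIntegral_mono_on hball_int hg_int Metric.isOpen_ball.measurableSet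
    intro v hv
    have h1 : r ≤ ‖v‖ := (hball_dom v (Metric.ball_subset_closedBall hv)).1
    have h2 : ‖v‖ ≤ R + r := (hball_dom v (Metric.ball_subset_closedBall hv)).2
    have hFv : 0 ≤ F v := hnn v (by linarith)
    have habs0 : 0 < ‖v‖ := by linarith
    have hEq : (3*R/2) * (F v / ‖v‖) = F v * ((3*R/2) / ‖v‖) := by ring
    have hRr : R + r = 3*R/2 := by rw [hrdef]; ring
    have hfrac : 1 ≤ (3*R/2) / ‖v‖ := (one_le_div habs0).2 (by linarith)
    nlinarith
  have hstep4b : (∫ v in Metric.ball w r, (3*R/2) * (F v / ‖v‖))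
      ≤ (3*R/2) * B := by
    rw [MeasureTheory.integral_const_mul]
    apply mul_le_mul_of_nonneg_left _ (by rw [hRdef]; positivity)
    apply setIntegral_mono_set hint
    · filter_upwards [self_mem_ae_restrict hnn_set] with v hv
      exact div_nonneg (hnn v hv) (norm_nonneg v)
    · exact HasSubset.Subset.eventuallyLE hball_sub
  calc π * R^2/4 * F w = π * r^2 * F w := by rw [hrdef]; ring
    _ = ∫ ρ in Set.Ioo (0:ℝ) r, 2*π*ρ*(F w) := hval.symm
    _ ≤ ∫ ρ in Set.Ioo (0:ℝ) r, ∫ θ in Set.Ioo (-π) π,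
          ρ * F (w + ρ * Complex.exp (θ * Complex.I)) := hmono
    _ = ∫ v in Metric.ball w r, F v := by rw [← hfub, hpolar]
    _ ≤ ∫ v in Metric.ball w r, (3*R/2) * (F v / ‖v‖) := hstep4a
    _ ≤ (3*R/2) * B := hstep4b


/-- let `F` be a nonnegative continuous function on `{|w| ≥ 1}`
satisfying the sub-mean value property (subharmonicity) on `{|w| > 1}`, and
suppose `∫_{|w|≥1} F(w)/|w| dμ(w) < ∞`.  Then `F` is bounded; more precisely
`F(w) ≤ max_{|v|=1} F(v)` for every `w` with `|w| ≥ 1`. -/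
theorem stmt5 (F : ℂ → ℝ)
    (hcont : ContinuousOn F {w : ℂ | 1 ≤ ‖w‖})
    (hnn : ∀ w : ℂ, 1 ≤ ‖w‖ → 0 ≤ F w)
    (hsub : ∀ w : ℂ, 1 < ‖w‖ → ∀ ρ : ℝ, 0 < ρ →
      Metric.closedBall w ρ ⊆ {w : ℂ | 1 < ‖w‖} →
      F w ≤ (1 / (2 * π)) * ∫ θ in (0 : ℝ)..(2 * π),
        F (w + ρ * Complex.exp (θ * Complex.I)))
    (hint : IntegrableOn (fun w : ℂ => F w / ‖w‖)
      {w : ℂ | 1 ≤ ‖w‖} volume) :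
    ∀ w : ℂ, 1 ≤ ‖w‖ →
      F w ≤ sSup (F '' {v : ℂ | ‖v‖ = 1}) := by
  intro w hw
  set B := ∫ v in {v : ℂ | 1 ≤ ‖v‖}, F v / ‖v‖ with hB
  have hπ := Real.pi_pos
  have hmeas : MeasurableSet {v : ℂ | 1 ≤ ‖v‖} :=
    (isClosed_le continuous_const continuous_norm).measurableSet
  have hBnn : 0 ≤ B :=
    setIntegral_nonneg hmeas (fun v hv => div_nonneg (hnn v hv) (norm_nonneg v))
  set M := sSup (F '' {v : ℂ | ‖v‖ = 1}) with hM
  have hBdd1 : BddAbove (F '' {v : ℂ | ‖v‖ = 1}) :=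
    (sphereCompactImage F hcont 1 le_rfl).bddAbove
  have hMnn : 0 ≤ M := le_trans (hnn 1 (by simp)) (le_csSup hBdd1 ⟨1, by simp, rfl⟩)
  apply le_of_forall_pos_le_add
  intro ε hε
  set R := max (max 3 (‖w‖)) (12 * B / (π * ε)) with hR
  have hR3 : (3:ℝ) ≤ R := le_trans (le_max_left _ _) (le_max_left _ _)
  have hRw : ‖w‖ ≤ R := le_trans (le_max_right _ _) (le_max_left _ _)
  have hRB : 12 * B / (π * ε) ≤ R := le_max_right _ _
  have hR1 : (1:ℝ) < R := lt_of_lt_of_le (by norm_num) hR3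
  have hR0 : (0:ℝ) < R := by linarith
  have key := maxPrinciple F hcont hsub R hR1 w hw hRw
  have h12 : 12 * B ≤ R * (π * ε) := (div_le_iff₀ (by positivity)).mp hRB
  have hsup : sSup (F '' {v : ℂ | ‖v‖ = R}) ≤ ε := by
    apply Real.sSup_le _ hε.le
    rintro x ⟨v, hv, rfl⟩
    have hvR : ‖v‖ = R := hv
    have h6 := areaBound F hcont hnn hsub hint v (by rw [hvR]; exact hR3)
    rw [hvR, ← hB] at h6
    have h1 : F v ≤ (3*R/2)*B / (π*R^2/4) := by
      rw [le_div_iff₀ (by positivity), mul_comm]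
      exact h6
    have h2 : (3*R/2)*B / (π*R^2/4) = 6*B/(π*R) := by
      field_simp
      ring
    have h3 : 6*B/(π*R) ≤ ε := by
      rw [div_le_iff₀ (by positivity)]
      nlinarith [h12, hBnn]
    linarith [h1, h2 ▸ h1, h3]
  calc F w ≤ max M (sSup (F '' {v : ℂ | ‖v‖ = R})) := key
    _ ≤ max M ε := max_le_max le_rfl hsup
    _ ≤ M + ε := max_le (le_add_of_nonneg_right hε.le) (le_add_of_nonneg_left hMnn)
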